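/- For every integer m ≥ 1, the bivariate generating function of the m-th triangle of the first family satisfies (1 + xy + (xy)² + ⋯ + (xy)^{m−1})·(1 − x − xy) · G_m(x,y) = 1, where G_m(x,y) is the formal power series in two variables x, y over ℤ whose coefficient of x^n y^k is B_m(n,k) for 0 ≤ k ≤ n and 0 for k > n. -/

import Mathlib

/-- The `m`-th Pascal-like triangle of the first family: `B m n 0 = 1`,
`B m n n = 1` if `m ∣ n` and `0` otherwise, and Pascal's recurrence
`B m n k = B m (n-1) k + B m (n-1) (k-1)` for `0 < k < n`.
(Values with `k > n` are set to `0`.) -/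
def B (m : ℕ) : ℕ → ℕ → ℕ
  | _, 0 => 1
  | 0, _ + 1 => 0
  | n + 1, k + 1 =>
      if n + 1 = k + 1 then (if m ∣ (n + 1) then 1 else 0)
      else if n + 1 < k + 1 then 0
      else B m n (k + 1) + B m n k

/-- Signed entries of the triangle, extended by `0` above the diagonal. -/
def g (m n k : ℕ) : ℤ := if k ≤ n then (B m n k : ℤ) else 0

lemma g_k_zero (m n : ℕ) : g m n 0 = 1 := by
  rcases n with _ | n <;> simp [g, B]

lemma g_diag (m n : ℕ) : g m n n = if m ∣ n then 1 else 0 := by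
  rcases n with _ | n
  · simp [g, B]
  · simp [g, B]

lemma g_rec (m n k : ℕ) (hk : 1 ≤ k) (hkn : k < n) :
    g m n k = g m (n - 1) k + g m (n - 1) (k - 1) := by
  obtain ⟨n', rfl⟩ : ∃ n', n = n' + 1 := ⟨n - 1, by omega⟩
  obtain ⟨k', rfl⟩ : ∃ k', k = k' + 1 := ⟨k - 1, by omega⟩
  have h1 : ¬ (n' + 1 = k' + 1) := by omega
  have h2 : ¬ (n' + 1 < k' + 1) := by omega
  simp only [g, B, if_neg h1, if_neg h2, Nat.add_sub_cancel]
  rw [if_pos (by omega : k' + 1 ≤ n' + 1), if_pos (by omega : k' + 1 ≤ n'),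
    if_pos (by omega : k' ≤ n')]
  push_cast
  ring

/-- The coefficients of `(1 - x - xy) * G` are supported on the diagonal. -/
lemma h_diag (m a b : ℕ) :
    g m a b - (if 1 ≤ a then g m (a - 1) b else 0)
      - (if 1 ≤ a ∧ 1 ≤ b then g m (a - 1) (b - 1) else 0)
      = if a = b then ((if m ∣ a then (1:ℤ) else 0) -
          (if 1 ≤ a ∧ m ∣ (a - 1) then (1:ℤ) else 0)) else 0 := by
  rcases Nat.lt_trichotomy a b with hab | rfl | hab
  · have h1 : g m a b = 0 := by simp [g]; omega
    rw [h1, if_neg (by omega : ¬ a = b)]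
    rcases Nat.eq_zero_or_pos a with rfl | ha
    · simp
    · have h2 : g m (a - 1) b = 0 := by simp [g]; omega
      have h3 : g m (a - 1) (b - 1) = 0 := by simp [g]; omega
      simp [h2, h3]
  · rcases Nat.eq_zero_or_pos a with rfl | ha
    · simp [g_diag]
    · have ha' : 1 ≤ a := ha
      have h2 : g m (a - 1) a = 0 := by simp [g]; omega
      rw [g_diag, h2, if_pos ha', if_pos (⟨ha', ha'⟩ : 1 ≤ a ∧ 1 ≤ a), g_diag]
      simp [ha']
  · have ha : 1 ≤ a := by omega
    rcases Nat.eq_zero_or_pos b with rfl | hb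
    · rw [g_k_zero, g_k_zero, if_pos ha, if_neg (by omega)]
      simp; omega
    · rw [g_rec m a b hb hab, if_pos ha, if_pos ⟨ha, hb⟩, if_neg (by omega)]
      ring

/-- Among `n, n-1, …, n-m+1` (clipped at `0`) exactly one is divisible by `m`. -/
lemma countA (m : ℕ) (hm : 1 ≤ m) (n : ℕ) :
    ∑ i ∈ Finset.range m, (if i ≤ n ∧ m ∣ (n - i) then (1 : ℤ) else 0) = 1 := by
  have key : ∀ i ∈ Finset.range m,
      (if i ≤ n ∧ m ∣ (n - i) then (1 : ℤ) else 0) = if i = n % m then 1 else 0 := by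
    intro i hi
    rw [Finset.mem_range] at hi
    congr 1
    simp only [eq_iff_iff]
    constructor
    · rintro ⟨h1, q, hq⟩
      have hn : n = m * q + i := by omega
      rw [hn, Nat.mul_add_mod, Nat.mod_eq_of_lt hi]
    · rintro rfl
      refine ⟨Nat.mod_le _ _, n / m, ?_⟩
      have := Nat.div_add_mod n m
      omega
  rw [Finset.sum_congr rfl key, Finset.sum_ite_eq' (Finset.range m) (n % m) (fun _ => (1:ℤ))]
  simp [Nat.mod_lt n hm]

/-- The key coefficient identity. -/
lemma key_sum (m : ℕ) (hm : 1 ≤ m) (n k : ℕ) :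
    ∑ i ∈ Finset.range m,
      ((if i ≤ n ∧ i ≤ k then g m (n - i) (k - i) else 0)
        - (if i + 1 ≤ n ∧ i ≤ k then g m (n - (i + 1)) (k - i) else 0)
        - (if i + 1 ≤ n ∧ i + 1 ≤ k then g m (n - (i + 1)) (k - (i + 1)) else 0))
    = if n = 0 ∧ k = 0 then 1 else 0 := by
  have step : ∀ i ∈ Finset.range m,
      ((if i ≤ n ∧ i ≤ k then g m (n - i) (k - i) else 0)
        - (if i + 1 ≤ n ∧ i ≤ k then g m (n - (i + 1)) (k - i) else 0)
        - (if i + 1 ≤ n ∧ i + 1 ≤ k then g m (n - (i + 1)) (k - (i + 1)) else 0))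
      = if i ≤ n ∧ i ≤ k then
          (if n - i = k - i then ((if m ∣ (n - i) then (1:ℤ) else 0) -
            (if 1 ≤ n - i ∧ m ∣ (n - i - 1) then (1:ℤ) else 0)) else 0)
        else 0 := by
    intro i _
    by_cases hc : i ≤ n ∧ i ≤ k
    · have A : (i + 1 ≤ n ∧ i ≤ k) ↔ (1 ≤ n - i) := by omega
      have Bc : (i + 1 ≤ n ∧ i + 1 ≤ k) ↔ (1 ≤ n - i ∧ 1 ≤ k - i) := by omega
      have e1 : n - (i + 1) = n - i - 1 := by omega
      have e2 : k - (i + 1) = k - i - 1 := by omega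
      rw [if_pos hc, if_pos hc, if_congr A rfl rfl, if_congr Bc rfl rfl, e1, e2]
      exact h_diag m (n - i) (k - i)
    · rw [if_neg hc, if_neg hc, if_neg (by omega : ¬ (i + 1 ≤ n ∧ i ≤ k)),
        if_neg (by omega : ¬ (i + 1 ≤ n ∧ i + 1 ≤ k))]
      ring
  rw [Finset.sum_congr rfl step]
  by_cases hnk : n = k
  · subst hnk
    have step2 : ∀ i ∈ Finset.range m,
        (if i ≤ n ∧ i ≤ n then
          (if n - i = n - i then ((if m ∣ (n - i) then (1:ℤ) else 0) -
            (if 1 ≤ n - i ∧ m ∣ (n - i - 1) then (1:ℤ) else 0)) else 0)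
        else 0)
        = (if i ≤ n ∧ m ∣ (n - i) then (1:ℤ) else 0)
          - (if i ≤ n ∧ 1 ≤ n - i ∧ m ∣ (n - i - 1) then (1:ℤ) else 0) := by
      intro i _
      by_cases hc : i ≤ n
      · simp only [hc, and_self, if_true, if_pos rfl]
        by_cases hd : 1 ≤ n - i ∧ m ∣ (n - i - 1) <;> simp [hd]
      · simp [hc]
    rw [Finset.sum_congr rfl step2, Finset.sum_sub_distrib, countA m hm n]
    rcases Nat.eq_zero_or_pos n with rfl | hn
    · simp
    · have e3 : ∀ i ∈ Finset.range m,
          (if i ≤ n ∧ 1 ≤ n - i ∧ m ∣ (n - i - 1) then (1:ℤ) else 0)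
          = (if i ≤ n - 1 ∧ m ∣ (n - 1 - i) then (1:ℤ) else 0) := by
        intro i _
        have : (i ≤ n ∧ 1 ≤ n - i ∧ m ∣ (n - i - 1)) ↔ (i ≤ n - 1 ∧ m ∣ (n - 1 - i)) := by
          constructor
          · rintro ⟨h1, h2, h3⟩
            exact ⟨by omega, by rwa [(by omega : n - 1 - i = n - i - 1)]⟩
          · rintro ⟨h1, h2⟩
            exact ⟨by omega, by omega, by rwa [(by omega : n - i - 1 = n - 1 - i)]⟩
        rw [if_congr this rfl rfl]
      rw [Finset.sum_congr rfl e3, countA m hm (n - 1)]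
      simp [hn, Nat.pos_iff_ne_zero.mp hn]
  · rw [if_neg (by omega : ¬ (n = 0 ∧ k = 0))]
    apply Finset.sum_eq_zero
    intro i _
    by_cases hc : i ≤ n ∧ i ≤ k
    · rw [if_pos hc, if_neg (by omega : ¬ (n - i = k - i))]
    · rw [if_neg hc]

lemma fin2_eq (a b : ℕ) (d : Fin 2 →₀ ℕ) (h0 : d 0 = a) (h1 : d 1 = b) :
    d = Finsupp.single 0 a + Finsupp.single 1 b := by
  ext j
  fin_cases j <;> simp [Finsupp.single_apply, ← h0, ← h1]

lemma fin2_le (a b c e : ℕ) :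
    (Finsupp.single 0 a + Finsupp.single 1 b : Fin 2 →₀ ℕ) ≤
      Finsupp.single 0 c + Finsupp.single 1 e ↔ a ≤ c ∧ b ≤ e := by
  rw [Finsupp.le_def]
  constructor
  · intro h
    refine ⟨?_, ?_⟩
    · simpa [Finsupp.single_apply] using h 0
    · simpa [Finsupp.single_apply] using h 1
  · rintro ⟨h1, h2⟩ j
    fin_cases j <;> simp [Finsupp.single_apply, h1, h2]

lemma fin2_sub (a b c e : ℕ) :
    (Finsupp.single 0 c + Finsupp.single 1 e : Fin 2 →₀ ℕ) -
      (Finsupp.single 0 a + Finsupp.single 1 b) =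
      Finsupp.single 0 (c - a) + Finsupp.single 1 (e - b) := by
  ext j
  fin_cases j <;> simp [Finsupp.tsub_apply, Finsupp.single_apply]

lemma fin2_eq_zero (a b : ℕ) :
    (Finsupp.single 0 a + Finsupp.single 1 b : Fin 2 →₀ ℕ) = 0 ↔ a = 0 ∧ b = 0 := by
  constructor
  · intro h
    constructor
    · simpa [Finsupp.single_apply] using DFunLike.congr_fun h 0
    · simpa [Finsupp.single_apply] using DFunLike.congr_fun h 1
  · rintro ⟨rfl, rfl⟩; simp

lemma xypow (i : ℕ) :
    ((MvPowerSeries.X 0 * MvPowerSeries.X 1 : MvPowerSeries (Fin 2) ℤ)) ^ i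
      = MvPowerSeries.monomial (Finsupp.single 0 i + Finsupp.single 1 i) 1 := by
  rw [mul_pow, MvPowerSeries.X_pow_eq, MvPowerSeries.X_pow_eq,
    MvPowerSeries.monomial_mul_monomial, one_mul]

lemma xypow_x (i : ℕ) :
    ((MvPowerSeries.X 0 * MvPowerSeries.X 1 : MvPowerSeries (Fin 2) ℤ)) ^ i *
      MvPowerSeries.X 0
      = MvPowerSeries.monomial (Finsupp.single 0 (i+1) + Finsupp.single 1 i) 1 := by
  have he : (Finsupp.single 0 i + Finsupp.single 1 i) + Finsupp.single 0 1
      = (Finsupp.single 0 (i+1) + Finsupp.single 1 i : Fin 2 →₀ ℕ) := by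
    ext j
    fin_cases j <;> simp [Finsupp.single_apply]
  rw [xypow, MvPowerSeries.X_def, MvPowerSeries.monomial_mul_monomial, one_mul, he]

lemma xypow_xy (i : ℕ) :
    ((MvPowerSeries.X 0 * MvPowerSeries.X 1 : MvPowerSeries (Fin 2) ℤ)) ^ i *
      (MvPowerSeries.X 0 * MvPowerSeries.X 1)
      = MvPowerSeries.monomial (Finsupp.single 0 (i+1) + Finsupp.single 1 (i+1)) 1 := by
  rw [← pow_succ, xypow]

lemma coeff_mon (a b n k : ℕ) (G : MvPowerSeries (Fin 2) ℤ) :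
    MvPowerSeries.coeff (Finsupp.single 0 n + Finsupp.single 1 k)
      (MvPowerSeries.monomial (Finsupp.single 0 a + Finsupp.single 1 b) (1:ℤ) * G)
    = if a ≤ n ∧ b ≤ k then
        MvPowerSeries.coeff (Finsupp.single 0 (n-a) + Finsupp.single 1 (k-b)) G else 0 := by
  rw [MvPowerSeries.coeff_monomial_mul]
  by_cases h : a ≤ n ∧ b ≤ k
  · rw [if_pos ((fin2_le a b n k).mpr h), if_pos h, fin2_sub, one_mul]
  · rw [if_neg (fun hh => h ((fin2_le a b n k).mp hh)), if_neg h]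

/-- The bivariate generating function `G` of the `m`-th triangle of the first
family satisfies `(1 + xy + ⋯ + (xy)^(m-1)) * (1 - x - xy) * G = 1`. -/
theorem stmt_7 (m : ℕ) (hm : 1 ≤ m) (G : MvPowerSeries (Fin 2) ℤ)
    (hG : ∀ n k : ℕ,
      MvPowerSeries.coeff (Finsupp.single 0 n + Finsupp.single 1 k) G
        = if k ≤ n then (B m n k : ℤ) else 0) :
    (∑ i ∈ Finset.range m, (MvPowerSeries.X 0 * MvPowerSeries.X 1) ^ i) *
        (1 - MvPowerSeries.X 0 - MvPowerSeries.X 0 * MvPowerSeries.X 1) * G = 1 := by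
  classical
  have hG' : ∀ n k : ℕ,
      MvPowerSeries.coeff (Finsupp.single 0 n + Finsupp.single 1 k) G = g m n k := by
    intro n k; rw [hG]; rfl
  rw [Finset.sum_mul, Finset.sum_mul]
  apply MvPowerSeries.ext
  intro d
  rw [map_sum, MvPowerSeries.coeff_one]
  set n := d 0 with hn
  set k := d 1 with hk
  have hd : d = Finsupp.single 0 n + Finsupp.single 1 k := fin2_eq n k d rfl rfl
  have hterm : ∀ i ∈ Finset.range m,
      MvPowerSeries.coeff d
        ((MvPowerSeries.X 0 * MvPowerSeries.X 1) ^ i *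
          (1 - MvPowerSeries.X 0 - MvPowerSeries.X 0 * MvPowerSeries.X 1) * G)
      = (if i ≤ n ∧ i ≤ k then g m (n - i) (k - i) else 0)
        - (if i + 1 ≤ n ∧ i ≤ k then g m (n - (i + 1)) (k - i) else 0)
        - (if i + 1 ≤ n ∧ i + 1 ≤ k then g m (n - (i + 1)) (k - (i + 1)) else 0) := by
    intro i _
    rw [mul_sub, mul_sub, mul_one, sub_mul, sub_mul, xypow_x, xypow_xy, xypow,
      map_sub, map_sub, hd, coeff_mon, coeff_mon, coeff_mon]
    by_cases h1 : i ≤ n ∧ i ≤ k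
    · rw [if_pos h1, hG'] 
      by_cases h2 : i + 1 ≤ n ∧ i ≤ k
      · rw [if_pos h2, hG']
        by_cases h3 : i + 1 ≤ n ∧ i + 1 ≤ k
        · rw [if_pos h3, if_pos h1, if_pos h2, if_pos h3, hG']
        · rw [if_neg h3, if_pos h1, if_pos h2, if_neg h3]
      · rw [if_neg h2, if_neg (by omega : ¬ (i + 1 ≤ n ∧ i + 1 ≤ k)), if_pos h1,
          if_neg h2, if_neg (by omega : ¬ (i + 1 ≤ n ∧ i + 1 ≤ k))]
    · rw [if_neg h1, if_neg (by omega : ¬ (i + 1 ≤ n ∧ i ≤ k)),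
        if_neg (by omega : ¬ (i + 1 ≤ n ∧ i + 1 ≤ k)), if_neg h1,
        if_neg (by omega : ¬ (i + 1 ≤ n ∧ i ≤ k)),
        if_neg (by omega : ¬ (i + 1 ≤ n ∧ i + 1 ≤ k))]
  rw [Finset.sum_congr rfl hterm, key_sum m hm n k]
  have : d = 0 ↔ n = 0 ∧ k = 0 := by
    rw [hd]; exact fin2_eq_zero n k
  rw [if_congr this.symm rfl rfl]
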